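/- Let C be a category with finite limits and (E,M) a stable orthogonal factorization system on C. Then (E,M) is anti-right-proper (i.e. M contains every monomorphism of C) if and only if every morphism in E is a regular epimorphism. -/

import Mathlib

open CategoryTheory CategoryTheory.Limits

universe v u

/-- An orthogonal factorization system `(E, M)` on a category `C`:
two classes of morphisms, each closed under composition and containing the
isomorphisms, such that every morphism factors as (arrow in `E`) ≫ (arrow in `M`),
and every commutative square with left side in `E` and right side in `M`
has a unique diagonal filler. -/
structure OrthFactSystem (C : Type u) [Category.{v} C] where
  E : MorphismProperty C
  M : MorphismProperty C
  E_iso : ∀ {X Y : C} (f : X ⟶ Y) [IsIso f], E f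
  M_iso : ∀ {X Y : C} (f : X ⟶ Y) [IsIso f], M f
  E_comp : ∀ {X Y Z : C} (f : X ⟶ Y) (g : Y ⟶ Z), E f → E g → E (f ≫ g)
  M_comp : ∀ {X Y Z : C} (f : X ⟶ Y) (g : Y ⟶ Z), M f → M g → M (f ≫ g)
  fac : ∀ {X Y : C} (f : X ⟶ Y), ∃ (Z : C) (e : X ⟶ Z) (m : Z ⟶ Y),
    E e ∧ M m ∧ e ≫ m = f
  lift : ∀ {X Y A B : C} (e : X ⟶ Y) (m : A ⟶ B) (u : X ⟶ A) (v : Y ⟶ B),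
    E e → M m → u ≫ m = e ≫ v → ∃! d : Y ⟶ A, e ≫ d = u ∧ d ≫ m = v

/-- A factorization system is stable if the left class `E` is stable under
pullback: in any pullback square, the pullback of a morphism in `E` along an
arbitrary morphism again lies in `E`. -/
def OrthFactSystem.Stable {C : Type u} [Category.{v} C] (S : OrthFactSystem C) : Prop :=
  ∀ {P X Y Z : C} (fst : P ⟶ X) (snd : P ⟶ Y) (f : X ⟶ Z) (g : Y ⟶ Z),
    IsPullback fst snd f g → S.E f → S.E snd

namespace OrthFactSystem

variable {C : Type u} [Category.{v} C]

/-- A morphism lying in both classes is an isomorphism. -/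
lemma isIso_of_E_of_M (S : OrthFactSystem C) {X Y : C} (f : X ⟶ Y)
    (hE : S.E f) (hM : S.M f) : IsIso f := by
  obtain ⟨d, ⟨hd1, hd2⟩, -⟩ := S.lift f f (𝟙 X) (𝟙 Y) hE hM (by simp)
  exact ⟨d, hd1, hd2⟩

/-- If `M` contains all monomorphisms, every morphism in `E` is an epimorphism. -/
lemma epi_of_E (S : OrthFactSystem C) [HasFiniteLimits C]
    (hmono : ∀ {A B : C} (m : A ⟶ B), Mono m → S.M m)
    {X Y : C} (e : X ⟶ Y) (hE : S.E e) : Epi e := by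
  constructor
  intro Z f g hfg
  obtain ⟨d, ⟨hd1, hd2⟩, -⟩ := S.lift e (equalizer.ι f g) (equalizer.lift e hfg) (𝟙 Y) hE
    (hmono _ inferInstance) (by simp)
  haveI : IsIso (equalizer.ι f g) := by
    refine ⟨d, ?_, hd2⟩
    rw [← cancel_mono (equalizer.ι f g)]
    simp [hd2]
  rw [← cancel_epi (equalizer.ι f g)]
  exact equalizer.condition f g

/-- Right cancellation for the left class. -/
lemma E_of_comp_left (S : OrthFactSystem C) {X Y Z : C} (e₁ : X ⟶ Y) (w : Y ⟶ Z)
    (h1 : S.E e₁) (h2 : S.E (e₁ ≫ w)) : S.E w := by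
  obtain ⟨V, e', m', hE', hM', hw⟩ := S.fac w
  obtain ⟨d, ⟨hd1, hd2⟩, -⟩ := S.lift (e₁ ≫ w) m' (e₁ ≫ e') (𝟙 Z) h2 hM'
    (by rw [Category.assoc, hw, Category.comp_id])
  obtain ⟨δ, -, huniq⟩ := S.lift (e₁ ≫ e') m' (e₁ ≫ e') m' (S.E_comp _ _ h1 hE') hM' rfl
  have h1' : m' ≫ d = δ := huniq _
    ⟨by rw [← Category.assoc, Category.assoc e₁ e' m', hw, hd1],
     by rw [Category.assoc, hd2, Category.comp_id]⟩
  have h2' : 𝟙 V = δ := huniq _ ⟨Category.comp_id _, Category.id_comp _⟩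
  haveI : IsIso m' := ⟨d, by rw [h1', ← h2'], hd2⟩
  rw [← hw]
  exact S.E_comp _ _ hE' (S.E_iso m')

/-- The key descent lemma: if `e ∈ E` and `g` coequalizes the kernel pair of `e`,
then `g` factors uniquely through `e`. -/
lemma exists_desc (S : OrthFactSystem C) [HasFiniteLimits C] (hS : S.Stable)
    (hmono : ∀ {A B : C} (m : A ⟶ B), Mono m → S.M m)
    {X Y Z : C} (e : X ⟶ Y) (hE : S.E e) (g : X ⟶ Z)
    (hg : pullback.fst e e ≫ g = pullback.snd e e ≫ g) :
    ∃! h : Y ⟶ Z, e ≫ h = g := by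
  haveI hepi : Epi e := S.epi_of_E hmono e hE
  have hEb : S.E (pullback.snd e e) := hS _ _ _ _ (IsPullback.of_hasPullback e e) hE
  have hEa : S.E (pullback.fst e e) := hS _ _ _ _ (IsPullback.of_hasPullback e e).flip hE
  obtain ⟨V, e₂, m₂, hE₂, hM₂, hf⟩ := S.fac (prod.lift e g)
  have haf : pullback.fst e e ≫ prod.lift e g = pullback.snd e e ≫ prod.lift e g := by
    apply Limits.prod.hom_ext
    · rw [Category.assoc, Category.assoc, prod.lift_fst]; exact pullback.condition
    · rw [Category.assoc, Category.assoc, prod.lift_snd]; exact hg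
  -- the diagonal `d` obtained from lifting against the kernel-pair projection
  obtain ⟨d, ⟨hd1, hd2⟩, -⟩ := S.lift (pullback.fst e e) m₂ (pullback.snd e e ≫ e₂)
    (prod.lift e g) hEa hM₂ (by rw [Category.assoc, hf, ← haf])
  have hbd : pullback.snd e e ≫ d = pullback.fst e e ≫ e₂ := by
    have h1 : (pullbackSymmetry e e).hom ≫ pullback.fst e e ≫ d
        = (pullbackSymmetry e e).hom ≫ pullback.snd e e ≫ e₂ := by rw [hd1]
    simpa using h1
  -- the triple pullback
  have hEp : S.E (pullback.fst (pullback.snd e e) (pullback.fst e e)) :=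
    hS _ _ _ _ (IsPullback.of_hasPullback (pullback.snd e e) (pullback.fst e e)).flip hEa
  have h02 : (pullback.fst (pullback.snd e e) (pullback.fst e e) ≫ pullback.fst e e) ≫ e
      = (pullback.snd (pullback.snd e e) (pullback.fst e e) ≫ pullback.snd e e) ≫ e := by
    rw [Category.assoc, pullback.condition (f := e) (g := e), ← Category.assoc,
      pullback.condition (f := pullback.snd e e) (g := pullback.fst e e),
      Category.assoc, pullback.condition (f := e) (g := e), Category.assoc]
  -- the uniqueness square on the triple pullback
  have hcomm : (pullback.snd (pullback.snd e e) (pullback.fst e e) ≫ pullback.snd e e ≫ e₂) ≫ m₂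
      = pullback.fst (pullback.snd e e) (pullback.fst e e) ≫
        (pullback.fst e e ≫ prod.lift e g) := by
    rw [Category.assoc, Category.assoc, hf, ← haf, ← Category.assoc,
      ← pullback.condition (f := pullback.snd e e) (g := pullback.fst e e),
      Category.assoc, ← haf]
  obtain ⟨δ, -, hun⟩ := S.lift (pullback.fst (pullback.snd e e) (pullback.fst e e)) m₂
    (pullback.snd (pullback.snd e e) (pullback.fst e e) ≫ pullback.snd e e ≫ e₂)
    (pullback.fst e e ≫ prod.lift e g) hEp hM₂ hcomm
  have c1 : pullback.fst e e ≫ d = δ := by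
    apply hun
    constructor
    · have hq : (pullback.lift
          (pullback.fst (pullback.snd e e) (pullback.fst e e) ≫ pullback.fst e e)
          (pullback.snd (pullback.snd e e) (pullback.fst e e) ≫ pullback.snd e e) h02)
          ≫ (pullback.fst e e ≫ d)
        = (pullback.lift _ _ h02) ≫ (pullback.snd e e ≫ e₂) := by rw [hd1]
      rw [← Category.assoc, pullback.lift_fst, ← Category.assoc, pullback.lift_snd] at hq
      rw [← Category.assoc, hq, Category.assoc]
    · rw [Category.assoc, hd2]
  have c2 : pullback.snd e e ≫ d = δ := by
    apply hun
    constructor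
    · rw [← Category.assoc, pullback.condition (f := pullback.snd e e) (g := pullback.fst e e),
        Category.assoc, hd1]
    · rw [Category.assoc, hd2, ← haf]
  -- the decisive equality
  have key : pullback.fst e e ≫ e₂ = pullback.snd e e ≫ e₂ := by
    rw [← hbd, c2, ← c1, hd1]
  -- `w`, the first component of `m₂`
  set w : V ⟶ Y := m₂ ≫ prod.fst with hwdef
  have hew : e₂ ≫ w = e := by rw [hwdef, ← Category.assoc, hf, prod.lift_fst]
  -- the comparison map from the kernel pair of `e` to the kernel pair of `w` is in `E`
  have hmap1pf : pullback.fst e e ≫ e = (pullback.snd e e ≫ e₂) ≫ w := by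
    rw [Category.assoc, hew, pullback.condition]
  set map1 : pullback e e ⟶ pullback e w :=
    pullback.lift (pullback.fst e e) (pullback.snd e e ≫ e₂) hmap1pf with hm1def
  have hmap2pf : (pullback.fst e w ≫ e₂) ≫ w = pullback.snd e w ≫ w := by
    rw [Category.assoc, hew, pullback.condition]
  set map2 : pullback e w ⟶ pullback w w :=
    pullback.lift (pullback.fst e w ≫ e₂) (pullback.snd e w) hmap2pf with hm2def
  have hip1 : IsPullback (pullback.snd e e) map1 e₂ (pullback.snd e w) := by
    apply IsPullback.of_bot (h₃₁ := e) (v₂₁ := pullback.fst e w) (v₂₂ := w)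
    · rw [show map1 ≫ pullback.fst e w = pullback.fst e e from pullback.lift_fst _ _ _, hew]
      exact (IsPullback.of_hasPullback e e).flip
    · exact (pullback.lift_snd _ _ _).symm
    · exact (IsPullback.of_hasPullback e w).flip
  have hip2 : IsPullback (pullback.fst e w) map2 e₂ (pullback.fst w w) := by
    apply IsPullback.of_bot (h₃₁ := w) (v₂₁ := pullback.snd w w) (v₂₂ := w)
    · rw [show map2 ≫ pullback.snd w w = pullback.snd e w from pullback.lift_snd _ _ _, hew]
      exact IsPullback.of_hasPullback e w
    · exact (pullback.lift_fst _ _ _).symm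
    · exact IsPullback.of_hasPullback w w
  have hEm1 : S.E map1 := hS _ _ _ _ hip1 hE₂
  have hEm2 : S.E map2 := hS _ _ _ _ hip2 hE₂
  haveI hκepi : Epi (map1 ≫ map2) := S.epi_of_E hmono _ (S.E_comp _ _ hEm1 hEm2)
  have hκr : (map1 ≫ map2) ≫ pullback.fst w w = pullback.fst e e ≫ e₂ := by
    rw [Category.assoc, pullback.lift_fst, ← Category.assoc, pullback.lift_fst]
  have hκs : (map1 ≫ map2) ≫ pullback.snd w w = pullback.snd e e ≫ e₂ := by
    rw [Category.assoc, pullback.lift_snd, pullback.lift_snd]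
  have hrs : pullback.fst w w = pullback.snd w w := by
    rw [← cancel_epi (map1 ≫ map2), hκr, hκs, key]
  have hMonow : Mono w := by
    constructor
    intro U α β hαβ
    exact (pullback.lift_fst α β hαβ).symm.trans (by rw [hrs, pullback.lift_snd])
  have hEw : S.E w := S.E_of_comp_left e₂ w hE₂ (by rw [hew]; exact hE)
  haveI hIw : IsIso w := S.isIso_of_E_of_M w hEw (hmono w hMonow)
  have hcomp : e ≫ inv w ≫ m₂ ≫ prod.snd = g := by
    rw [← hew, Category.assoc, IsIso.hom_inv_id_assoc, ← Category.assoc, hf, prod.lift_snd]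
  refine ⟨inv w ≫ m₂ ≫ prod.snd, hcomp, ?_⟩
  intro h' hh'
  rw [← cancel_epi e, hh', hcomp]

end OrthFactSystem

/-- For a stable orthogonal factorization system `(E, M)` on a
finitely complete category, `M` contains every monomorphism (anti-right-properness)
if and only if every morphism in `E` is a regular epimorphism. -/
theorem anti_right_proper_iff_E_regularEpi
    {C : Type u} [Category.{v} C] [HasFiniteLimits C]
    (S : OrthFactSystem C) (hS : S.Stable) :
    (∀ {A B : C} (m : A ⟶ B), Mono m → S.M m) ↔
      (∀ {X Y : C} (f : X ⟶ Y), S.E f → Nonempty (RegularEpi f)) := by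
  constructor
  · intro hmono X Y f hEf
    exact ⟨{ W := pullback f f
             left := pullback.fst f f
             right := pullback.snd f f
             w := pullback.condition
             isColimit := Cofork.IsColimit.ofExistsUnique fun s => by
               simpa using S.exists_desc hS hmono f hEf s.π s.condition }⟩
  · intro hreg A B m hm
    obtain ⟨V, e', m', hE', hM', hfac⟩ := S.fac m
    haveI : Mono (e' ≫ m') := by rwa [hfac]
    haveI : Mono e' := mono_of_mono e' m'
    haveI : IsRegularEpi e' := ⟨hreg e' hE'⟩
    haveI : IsIso e' := isIso_of_mono_of_strongEpi e'
    rw [← hfac]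
    exact S.M_comp _ _ (S.M_iso e') hM'
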